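/- The polynomial (1/(a_1!⋯a_k!)) Σ_{T ⊆ {1,…,n}} (−1)^{|T|} f_λ(|{1,…,n}\T|) ∏_{i=1}^k f_λ(|A_i ∩ T|) is constant as a polynomial in λ, and equals (1/(a_1!⋯a_k!)) Σ_{π ∈ S_n} c(π). -/

import Mathlib

/-- Apply a permutation of `Fin n` to a natural number (0-based indexing);
indices `≥ n` are left fixed. -/
def appl {n : ℕ} (π : Equiv.Perm (Fin n)) (j : ℕ) : ℕ :=
  if h : j < n then ((π ⟨j, h⟩ : Fin n) : ℕ) else j

/-- The starting index (0-based) of the `i`-th consecutive block when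
`{0,…,n-1}` is partitioned into blocks of sizes `a 0, …, a (k-1)`. -/
def blockStart {k : ℕ} (a : Fin k → ℕ) (i : Fin k) : ℕ := ∑ t ∈ Finset.Iio i, a t

/-- `x` lies in the `i`-th block. -/
def inBlock {k : ℕ} (a : Fin k → ℕ) (i : Fin k) (x : ℕ) : Prop :=
  blockStart a i ≤ x ∧ x < blockStart a i + a i

instance {k : ℕ} (a : Fin k → ℕ) (i : Fin k) : DecidablePred (inBlock a i) := fun x =>
  inferInstanceAs (Decidable (blockStart a i ≤ x ∧ x < blockStart a i + a i))

/-- An `(a₁,…,a_k,S)`-permutation: a permutation of `{0,…,n-1}` (where `n = ∑ aᵢ`)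
that is strictly decreasing on each block `Aᵢ` with `i ∈ S` and strictly
increasing on each block `Aᵢ` with `i ∉ S`. -/
def IsASPerm {k : ℕ} (a : Fin k → ℕ) (S : Finset (Fin k))
    (π : Equiv.Perm (Fin (∑ t, a t))) : Prop :=
  ∀ i : Fin k, ∀ j : ℕ, blockStart a i ≤ j → j + 1 < blockStart a i + a i →
    if i ∈ S then appl π (j + 1) < appl π j else appl π j < appl π (j + 1)

/-- The `i`-th block as a finset of `Fin n`. -/
def blockFin {k : ℕ} (a : Fin k → ℕ) (i : Fin k) : Finset (Fin (∑ t, a t)) :=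
  Finset.univ.filter (fun x => inBlock a i (x : ℕ))

/-- The small cycles of `π` of length `≥ 2`. -/
def smallCycles {k : ℕ} (a : Fin k → ℕ) (π : Equiv.Perm (Fin (∑ t, a t))) :
    Finset (Equiv.Perm (Fin (∑ t, a t))) :=
  π.cycleFactorsFinset.filter (fun c => ∃ i, ∀ x ∈ c.support, inBlock a i (x : ℕ))

/-- `c(π)`: zero if `π` has an odd-length small cycle (in particular, a fixed
point), and `2^m` otherwise, `m` being the number of small cycles. -/
def cWeight {k : ℕ} (a : Fin k → ℕ) (π : Equiv.Perm (Fin (∑ t, a t))) : ℕ :=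
  if (∃ x, π x = x) ∨ ∃ c ∈ smallCycles a π, Odd c.support.card then 0
  else 2 ^ (smallCycles a π).card

/-- `f_λ(m) = ∑_{σ ∈ S_m} λ^{fix(σ)}`, the generating polynomial of permutations
of `{1,…,m}` by number of fixed points. -/
noncomputable def fpol (m : ℕ) : Polynomial ℚ :=
  ∑ σ : Equiv.Perm (Fin m), Polynomial.X ^ (Nat.card {x : Fin m // σ x = x})

set_option linter.unusedSectionVars false
open Finset Equiv Equiv.Perm Polynomial

variable {α : Type*} [Fintype α] [DecidableEq α] {ι : Type*} [DecidableEq ι]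

/-- Permutations with support inside `S`. -/
def pOf (S : Finset α) : Finset (Equiv.Perm α) :=
  univ.filter (fun f => ∀ x ∉ S, f x = x)

noncomputable def PP (S : Finset α) : Polynomial ℚ :=
  ∑ f ∈ pOf S, X ^ (S.filter (fun x => f x = x)).card

theorem fpol_eq_PP (S : Finset α) : fpol S.card = PP S := by
  classical
  unfold fpol PP
  let e : Fin S.card ≃ {x // x ∈ S} := S.equivFin.symm
  let E : Equiv.Perm (Fin S.card) ≃ {f : Equiv.Perm α // ∀ x ∉ S, f x = x} :=
    e.permCongr.trans (Equiv.Perm.subtypeEquivSubtypePerm (fun x => x ∈ S))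
  rw [Finset.sum_subtype (p := fun f : Equiv.Perm α => ∀ x ∉ S, f x = x) (pOf S)
    (fun f => by simp [pOf]) (fun f => (X : Polynomial ℚ) ^ (S.filter (fun x => f x = x)).card)]
  refine Fintype.sum_equiv E _ _ (fun σ => ?_)
  congr 1
  have h1 : Nat.card {x : Fin S.card // σ x = x} =
      Nat.card {x : {x // x ∈ S} // (e.permCongr σ) x = x} := by
    refine Nat.card_congr (Equiv.subtypeEquiv e (fun x => ?_))
    simp [Equiv.permCongr_apply]
  have hfix : ∀ (x : α) (hx : x ∈ S),
      ((E σ : Equiv.Perm α) x = x ↔ (e.permCongr σ) ⟨x, hx⟩ = ⟨x, hx⟩) := by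
    intro x hx
    have : (E σ : Equiv.Perm α) x = ((e.permCongr σ) ⟨x, hx⟩ : α) := by
      simpa [E] using Equiv.Perm.ofSubtype_apply_of_mem (e.permCongr σ) hx
    rw [this]
    exact ⟨fun h => Subtype.ext h, fun h => congrArg Subtype.val h⟩
  have h2 : (S.filter (fun x => (E σ : Equiv.Perm α) x = x)).card =
      Nat.card {x : {x // x ∈ S} // (e.permCongr σ) x = x} := by
    rw [Nat.card_eq_fintype_card, Fintype.card_subtype]
    refine Finset.card_bij (fun x hx => ⟨x, (Finset.mem_filter.mp hx).1⟩) ?_ ?_ ?_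
    · intro x hx
      have := Finset.mem_filter.mp hx
      simp only [Finset.mem_filter, Finset.mem_univ, true_and]
      exact (hfix x this.1).mp this.2
    · intro x hx y hy h
      exact congrArg Subtype.val h
    · intro y hy
      refine ⟨y.1, Finset.mem_filter.mpr ⟨y.2, ?_⟩, by simp⟩
      have := Finset.mem_filter.mp hy
      exact (hfix y.1 y.2).mpr (by simpa using this.2)
  rw [h1, h2]

section helpers

theorem fixc_apply_mem {f : Equiv.Perm α} {S : Finset α} (hf : ∀ x ∉ S, f x = x)
    {x : α} (hx : x ∈ S) : f x ∈ S := by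
  by_contra h
  have h2 := hf _ h
  have h3 := f.injective h2
  rw [h3] at h
  exact h hx

theorem fixc_inv {f : Equiv.Perm α} {S : Finset α} (hf : ∀ x ∉ S, f x = x) :
    ∀ x ∉ S, f⁻¹ x = x := by
  intro x hx
  have hs : f.support ⊆ S := fun y hy => by
    by_contra h; exact (Equiv.Perm.mem_support.mp hy) (hf y h)
  have : x ∉ f⁻¹.support := fun h => hx (hs (by rwa [Equiv.Perm.support_inv] at h))
  exact Equiv.Perm.notMem_support.mp this

theorem mem_iff_apply_mem (π : Equiv.Perm α) (S : Finset α) (h : ∀ x ∈ S, π x ∈ S) :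
    ∀ x, x ∈ S ↔ π x ∈ S := by
  intro x
  constructor
  · exact h x
  · intro hx
    let g : {y // y ∈ S} → {y // y ∈ S} := fun y => ⟨π y, h _ y.2⟩
    have hginj : Function.Injective g := by
      intro u v huv
      exact Subtype.ext (π.injective (congrArg Subtype.val huv))
    have hgsurj : Function.Surjective g := Finite.surjective_of_injective hginj
    obtain ⟨y, hy⟩ := hgsurj ⟨π x, hx⟩
    have : π y.1 = π x := congrArg Subtype.val hy
    have := π.injective this
    rw [← this]; exact y.2

/-- restriction of a permutation to an invariant finset, junk value `1` otherwise -/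
noncomputable def restr (π : Equiv.Perm α) (S : Finset α) : Equiv.Perm α :=
  if h : ∀ x ∈ S, π x ∈ S then
    Equiv.Perm.ofSubtype (π.subtypePerm (fun x => (mem_iff_apply_mem π S h x).symm))
  else 1

theorem restr_apply_mem {π : Equiv.Perm α} {S : Finset α} (h : ∀ x ∈ S, π x ∈ S)
    {x : α} (hx : x ∈ S) : restr π S x = π x := by
  rw [restr, dif_pos h]
  rw [Equiv.Perm.ofSubtype_apply_of_mem _ hx]
  rfl

theorem restr_apply_not_mem {π : Equiv.Perm α} {S : Finset α}
    {x : α} (hx : x ∉ S) : restr π S x = x := by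
  rw [restr]
  split
  · exact Equiv.Perm.ofSubtype_apply_of_not_mem _ hx
  · rfl

end helpers

def pBlk (s : Finset ι) (S : ι → Finset α) : Finset (Equiv.Perm α) :=
  univ.filter (fun π => (∀ x, (∀ j ∈ s, x ∉ S j) → π x = x) ∧ ∀ j ∈ s, ∀ x ∈ S j, π x ∈ S j)

theorem mem_pBlk {s : Finset ι} {S : ι → Finset α} {π : Equiv.Perm α} :
    π ∈ pBlk s S ↔ (∀ x, (∀ j ∈ s, x ∉ S j) → π x = x) ∧ ∀ j ∈ s, ∀ x ∈ S j, π x ∈ S j := by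
  simp [pBlk]

theorem prod_PP (s : Finset ι) (S : ι → Finset α)
    (hdisj : ∀ i ∈ s, ∀ j ∈ s, i ≠ j → Disjoint (S i) (S j)) :
    ∏ j ∈ s, PP (S j) =
      ∑ π ∈ pBlk s S, X ^ (∑ j ∈ s, ((S j).filter (fun x => π x = x)).card) := by
  induction s using Finset.cons_induction with
  | empty =>
      have h1 : pBlk (∅ : Finset ι) S = {1} := by
        ext π
        simp [pBlk, Equiv.ext_iff]
      rw [h1]
      simp
  | @cons j0 s hj0 ih =>
      have hd : ∀ j ∈ s, Disjoint (S j0) (S j) := fun j hj =>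
        hdisj j0 (mem_cons_self _ _) j (mem_cons_of_mem hj) (fun h => hj0 (h ▸ hj))
      rw [Finset.prod_cons,
        ih (fun i hi j hj hij => hdisj i (mem_cons_of_mem hi) j (mem_cons_of_mem hj) hij)]
      show PP (S j0) * _ = _
      rw [PP, Finset.sum_mul_sum, ← Finset.sum_product']
      refine Finset.sum_nbij' (fun p => p.1 * p.2)
        (fun π => (restr π (S j0), (restr π (S j0))⁻¹ * π)) ?_ ?_ ?_ ?_ ?_
      · -- forward membership
        rintro ⟨f, g⟩ hp
        rw [Finset.mem_product] at hp
        obtain ⟨hf, hg⟩ := hp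
        rw [pOf, Finset.mem_filter] at hf
        have hf := hf.2
        rw [mem_pBlk] at hg ⊢
        constructor
        · intro x hx
          have hx0 : x ∉ S j0 := hx j0 (mem_cons_self _ _)
          have hgx : g x = x := hg.1 x (fun j hj => hx j (mem_cons_of_mem hj))
          simp [Equiv.Perm.mul_apply, hgx, hf x hx0]
        · intro j hj x hx
          rcases Finset.mem_cons.mp hj with rfl | hj
          · have hgx : g x = x := hg.1 x (fun j hj =>
              Finset.disjoint_left.mp (hd j hj) hx)
            simp only [Equiv.Perm.mul_apply, hgx]
            exact fixc_apply_mem hf hx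
          · have hgx : g x ∈ S j := hg.2 j hj x hx
            have : f (g x) = g x := hf _ (Finset.disjoint_right.mp (hd j hj) hgx)
            simpa [Equiv.Perm.mul_apply, this] using hgx
      · -- backward membership
        intro π hπ
        rw [mem_pBlk] at hπ
        have h0 : ∀ x ∈ S j0, π x ∈ S j0 := hπ.2 j0 (mem_cons_self _ _)
        rw [Finset.mem_product]
        constructor
        · rw [pOf, Finset.mem_filter]
          exact ⟨mem_univ _, fun x hx => restr_apply_not_mem hx⟩
        · rw [mem_pBlk]
          have hrfix : ∀ x ∉ S j0, (restr π (S j0))⁻¹ x = x :=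
            fixc_inv (fun x hx => restr_apply_not_mem hx)
          constructor
          · intro x hx
            by_cases hx0 : x ∈ S j0
            · have : restr π (S j0) x = π x := restr_apply_mem h0 hx0
              simp [Equiv.Perm.mul_apply, ← this]
            · have hπx : π x = x := hπ.1 x (by
                intro j hj
                rcases Finset.mem_cons.mp hj with rfl | hj
                · exact hx0
                · exact hx j hj)
              simp [Equiv.Perm.mul_apply, hπx, hrfix x hx0]
          · intro j hj x hx
            have hπx : π x ∈ S j := hπ.2 j (mem_cons_of_mem hj) x hx
            have : (restr π (S j0))⁻¹ (π x) = π x :=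
              hrfix _ (Finset.disjoint_right.mp (hd j hj) hπx)
            simpa [Equiv.Perm.mul_apply, this] using hπx
      · -- left inverse
        rintro ⟨f, g⟩ hp
        rw [Finset.mem_product] at hp
        obtain ⟨hf, hg⟩ := hp
        rw [pOf, Finset.mem_filter] at hf
        have hf := hf.2
        rw [mem_pBlk] at hg
        have hgfix : ∀ x ∈ S j0, g x = x := fun x hx =>
          hg.1 x (fun j hj => Finset.disjoint_left.mp (hd j hj) hx)
        have hr : restr (f * g) (S j0) = f := by
          have h0 : ∀ x ∈ S j0, (f * g) x ∈ S j0 := fun x hx => by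
            simp only [Equiv.Perm.mul_apply, hgfix x hx]
            exact fixc_apply_mem hf hx
          ext x
          by_cases hx : x ∈ S j0
          · rw [restr_apply_mem h0 hx]
            simp [Equiv.Perm.mul_apply, hgfix x hx]
          · rw [restr_apply_not_mem hx, hf x hx]
        simp [hr]
      · -- right inverse
        intro π hπ
        simp
      · -- values
        rintro ⟨f, g⟩ hp
        dsimp only
        rw [Finset.mem_product] at hp
        obtain ⟨hf, hg⟩ := hp
        rw [pOf, Finset.mem_filter] at hf
        have hf := hf.2
        rw [mem_pBlk] at hg
        rw [← pow_add, Finset.sum_cons]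
        congr 1
        have h1 : (S j0).filter (fun x => (f * g) x = x) = (S j0).filter (fun x => f x = x) := by
          apply Finset.filter_congr
          intro x hx
          have : g x = x := hg.1 x (fun j hj => Finset.disjoint_left.mp (hd j hj) hx)
          simp [Equiv.Perm.mul_apply, this]
        have h2 : ∀ j ∈ s, (S j).filter (fun x => (f * g) x = x)
            = (S j).filter (fun x => g x = x) := by
          intro j hj
          apply Finset.filter_congr
          intro x hx
          simp only [Equiv.Perm.mul_apply]
          by_cases hgx : g x = x
          · rw [hgx, hf x (Finset.disjoint_right.mp (hd j hj) hx)]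
          · have hgx' : g x ∈ S j := hg.2 j hj x hx
            rw [hf _ (Finset.disjoint_right.mp (hd j hj) hgx')]
        rw [h1]
        congr 1
        exact (Finset.sum_congr rfl (fun j hj => by rw [h2 j hj])).symm

section blocks

variable {k : ℕ} (a : Fin k → ℕ)

theorem sum_Iic_eq (i : Fin k) : ∑ t ∈ Finset.Iic i, a t = blockStart a i + a i := by
  rw [← Finset.Iio_insert, Finset.sum_insert (by simp), blockStart, Nat.add_comm]

theorem blockStart_add_le {i j : Fin k} (hij : i < j) :
    blockStart a i + a i ≤ blockStart a j := by
  rw [← sum_Iic_eq, blockStart]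
  exact Finset.sum_le_sum_of_subset (fun t ht => by
    rw [Finset.mem_Iio]; exact lt_of_le_of_lt (Finset.mem_Iic.mp ht) hij)

theorem inBlock_unique {i j : Fin k} {x : ℕ} (hi : inBlock a i x) (hj : inBlock a j x) :
    i = j := by
  by_contra h
  rcases lt_or_gt_of_ne h with hlt | hlt
  · exact absurd (lt_of_lt_of_le hi.2 (le_trans (blockStart_add_le a hlt) hj.1)) (lt_irrefl _)
  · exact absurd (lt_of_lt_of_le hj.2 (le_trans (blockStart_add_le a hlt) hi.1)) (lt_irrefl _)

theorem exists_inBlock {x : ℕ} (hx : x < ∑ t, a t) : ∃ i, inBlock a i x := by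
  have hk : k ≠ 0 := by
    rintro rfl
    simp at hx
  have h0 : (0 : ℕ) < k := Nat.pos_of_ne_zero hk
  let s : Finset (Fin k) := Finset.univ.filter (fun i => blockStart a i ≤ x)
  have hs : s.Nonempty := by
    refine ⟨⟨0, h0⟩, Finset.mem_filter.mpr ⟨Finset.mem_univ _, ?_⟩⟩
    have hz : blockStart a ⟨0, h0⟩ = 0 := by
      rw [blockStart]
      apply Finset.sum_eq_zero
      intro t ht
      exact absurd (Finset.mem_Iio.mp ht) (fun hc => Nat.not_lt_zero _ hc)
    omega
  set i := s.max' hs with hidef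
  have hi1 : blockStart a i ≤ x := (Finset.mem_filter.mp (s.max'_mem hs)).2
  refine ⟨i, hi1, ?_⟩
  by_contra hcon
  push_neg at hcon
  by_cases hlast : (i : ℕ) + 1 < k
  · have hsucc : blockStart a ⟨(i : ℕ) + 1, hlast⟩ = blockStart a i + a i := by
      rw [← sum_Iic_eq, blockStart]
      apply Finset.sum_congr _ (fun _ _ => rfl)
      ext t
      simp only [Finset.mem_Iio, Finset.mem_Iic, Fin.lt_def, Fin.le_def]
      exact Nat.lt_succ_iff
    have hmem : (⟨(i : ℕ) + 1, hlast⟩ : Fin k) ∈ s := by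
      refine Finset.mem_filter.mpr ⟨Finset.mem_univ _, ?_⟩
      rw [hsucc]
      exact hcon
    exact absurd (s.le_max' _ hmem) (not_le.mpr (by
      rw [Fin.lt_def]
      exact Nat.lt_succ_self _))
  · have huniv : Finset.Iic i = Finset.univ := by
      ext t
      simp only [Finset.mem_Iic, Finset.mem_univ, iff_true, Fin.le_def]
      have h1 := t.isLt
      have h2 := i.isLt
      omega
    have hfin : ∑ t, a t = blockStart a i + a i := by
      rw [← huniv, sum_Iic_eq]
    omega

end blocks

section main

variable {k : ℕ} (a : Fin k → ℕ)

/-- the partition of `Fin n` into `Tᶜ` and the pieces `blockFin a i ∩ T` -/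
def SB (T : Finset (Fin (∑ t, a t))) : Option (Fin k) → Finset (Fin (∑ t, a t))
  | none => Tᶜ
  | some i => blockFin a i ∩ T

def GT (T : Finset (Fin (∑ t, a t))) : Finset (Equiv.Perm (Fin (∑ t, a t))) :=
  pBlk Finset.univ (SB a T)

theorem mem_blockFin {i : Fin k} {x : Fin (∑ t, a t)} :
    x ∈ blockFin a i ↔ inBlock a i (x : ℕ) := by
  simp [blockFin]

theorem SB_cover (T : Finset (Fin (∑ t, a t))) (x : Fin (∑ t, a t)) :
    ∃ j, x ∈ SB a T j := by
  by_cases hx : x ∈ T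
  · obtain ⟨i, hi⟩ := exists_inBlock a x.isLt
    exact ⟨some i, Finset.mem_inter.mpr ⟨(mem_blockFin a).mpr hi, hx⟩⟩
  · exact ⟨none, Finset.mem_compl.mpr hx⟩

theorem SB_disj (T : Finset (Fin (∑ t, a t))) :
    ∀ i ∈ Finset.univ, ∀ j ∈ Finset.univ, i ≠ j → Disjoint (SB a T i) (SB a T j) := by
  have hbase : ∀ o, Disjoint (SB a T none) (SB a T (some o)) := by
    intro o
    rw [Finset.disjoint_left]
    intro x hx hx2
    exact (Finset.mem_compl.mp hx) (Finset.mem_inter.mp hx2).2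
  rintro (_ | i) _ (_ | j) _ hij
  · exact absurd rfl hij
  · exact hbase j
  · exact (hbase i).symm
  · rw [Finset.disjoint_left]
    intro x hx hx2
    have h1 := (mem_blockFin a).mp (Finset.mem_inter.mp hx).1
    have h2 := (mem_blockFin a).mp (Finset.mem_inter.mp hx2).1
    exact hij (by rw [inBlock_unique a h1 h2])

theorem mem_GT {T : Finset (Fin (∑ t, a t))} {π : Equiv.Perm (Fin (∑ t, a t))} :
    π ∈ GT a T ↔ (∀ x ∈ Tᶜ, π x ∈ Tᶜ) ∧
      (∀ i, ∀ x ∈ blockFin a i ∩ T, π x ∈ blockFin a i ∩ T) := by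
  rw [GT, mem_pBlk]
  constructor
  · rintro ⟨h1, h2⟩
    exact ⟨h2 none (mem_univ _), fun i => h2 (some i) (mem_univ _)⟩
  · rintro ⟨h1, h2⟩
    constructor
    · intro x hx
      obtain ⟨j, hj⟩ := SB_cover a T x
      exact absurd hj (hx j (mem_univ _))
    · rintro (_ | i) _
      · exact h1
      · exact h2 i

theorem sum_fix_card (T : Finset (Fin (∑ t, a t))) (q : Fin (∑ t, a t) → Prop)
    [DecidablePred q] :
    ∑ o : Option (Fin k), ((SB a T o).filter q).card = (Finset.univ.filter q).card := by
  rw [← Finset.card_biUnion (fun i hi j hj hij =>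
    Finset.disjoint_filter_filter (SB_disj a T i hi j hj hij))]
  congr 1
  ext x
  simp only [Finset.mem_biUnion, Finset.mem_filter, Finset.mem_univ, true_and]
  constructor
  · rintro ⟨o, _, hq⟩; exact hq
  · intro hq
    obtain ⟨j, hj⟩ := SB_cover a T x
    exact ⟨j, hj, hq⟩

set_option maxHeartbeats 1000000 in
theorem step1 (T : Finset (Fin (∑ t, a t))) :
    fpol Tᶜ.card * ∏ i, fpol ((blockFin a i ∩ T).card) =
      ∑ π ∈ GT a T, X ^ (Finset.univ.filter (fun x => π x = x)).card := by
  have h1 : fpol Tᶜ.card * ∏ i, fpol ((blockFin a i ∩ T).card) =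
      ∏ o : Option (Fin k), PP (SB a T o) := by
    rw [Fintype.prod_option]
    have e1 : SB a T none = Tᶜ := rfl
    have e2 : ∀ i, SB a T (some i) = blockFin a i ∩ T := fun i => rfl
    rw [e1, ← fpol_eq_PP Tᶜ]
    refine congrArg _ (Finset.prod_congr rfl (fun i _ => ?_))
    rw [e2 i, ← fpol_eq_PP]
  rw [h1, prod_PP Finset.univ (SB a T) (SB_disj a T)]
  apply Finset.sum_congr rfl
  intro π hπ
  congr 1
  exact sum_fix_card a T (fun x => π x = x)


section cyc

variable {β : Type*} [Fintype β] [DecidableEq β]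

theorem cf_apply {f c : Equiv.Perm β} (hc : c ∈ f.cycleFactorsFinset) {x : β}
    (hx : x ∈ c.support) : f x = c x :=
  ((Equiv.Perm.mem_cycleFactorsFinset_iff.mp hc).2 x hx).symm

theorem cf_apply_mem {f c : Equiv.Perm β} (hc : c ∈ f.cycleFactorsFinset) {x : β}
    (hx : x ∈ c.support) : f x ∈ c.support := by
  rw [cf_apply hc hx]
  exact Equiv.Perm.apply_mem_support.mpr hx

theorem cf_inv_apply_mem {f c : Equiv.Perm β} (hc : c ∈ f.cycleFactorsFinset) {x : β}
    (hx : x ∈ c.support) : f⁻¹ x ∈ c.support := by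
  have h1 : c⁻¹ x ∈ c.support := by
    rw [← Equiv.Perm.support_inv]
    exact Equiv.Perm.apply_mem_support.mpr (by rwa [Equiv.Perm.support_inv])
  have h2 : f (c⁻¹ x) = x := by
    rw [cf_apply hc h1, (Equiv.Perm.eq_inv_iff_eq (f := c)).mp rfl]
  rw [← h2, Equiv.Perm.inv_eq_iff_eq.mpr rfl]
  exact h1

theorem cf_ne {f c : Equiv.Perm β} (hc : c ∈ f.cycleFactorsFinset) {x : β}
    (hx : x ∈ c.support) : f x ≠ x := by
  rw [cf_apply hc hx]
  exact Equiv.Perm.mem_support.mp hx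

theorem cf_disj {f c d : Equiv.Perm β} (hc : c ∈ f.cycleFactorsFinset)
    (hd : d ∈ f.cycleFactorsFinset) (hcd : c ≠ d) :
    Disjoint c.support d.support :=
  (f.cycleFactorsFinset_pairwise_disjoint hc hd hcd).disjoint_support

theorem orbit_mem {S : Finset β} {f : Equiv.Perm β} (h : ∀ x ∈ S, f x ∈ S) :
    ∀ (m : ℕ), ∀ x ∈ S, (f ^ m) x ∈ S := by
  intro m
  induction m with
  | zero => intro x hx; simpa using hx
  | succ m ih =>
      intro x hx
      rw [pow_succ']
      simp only [Equiv.Perm.mul_apply]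
      exact h _ (ih x hx)

end cyc

section signedsec

variable {k : ℕ} (a : Fin k → ℕ)

theorem decomp {T : Finset (Fin (∑ t, a t))} {π : Equiv.Perm (Fin (∑ t, a t))}
    (hT : π ∈ GT a T) :
    ((smallCycles a π).filter (fun c => c.support ⊆ T)).biUnion (fun c => c.support)
      ∪ T.filter (fun x => π x = x) = T := by
  apply Finset.Subset.antisymm
  · apply Finset.union_subset
    · intro x hx
      obtain ⟨c, hc, hxc⟩ := Finset.mem_biUnion.mp hx
      exact (Finset.mem_filter.mp hc).2 hxc
    · exact Finset.filter_subset _ _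
  · intro x hx
    by_cases hfix : π x = x
    · exact Finset.mem_union_right _ (Finset.mem_filter.mpr ⟨hx, hfix⟩)
    · have hxs : x ∈ π.support := Equiv.Perm.mem_support.mpr hfix
      obtain ⟨i, hi⟩ := exists_inBlock a x.isLt
      have hxBT : x ∈ blockFin a i ∩ T :=
        Finset.mem_inter.mpr ⟨(mem_blockFin a).mpr hi, hx⟩
      have hinv := (mem_GT a).mp hT
      have hsub : (π.cycleOf x).support ⊆ blockFin a i ∩ T := by
        intro y hy
        have hsc := (Equiv.Perm.mem_support_cycleOf_iff.mp hy).1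
        obtain ⟨m, _, hm⟩ := hsc.exists_pow_eq'
        rw [← hm]
        exact orbit_mem (hinv.2 i) m x hxBT
      have hcSC : π.cycleOf x ∈ smallCycles a π := by
        rw [smallCycles, Finset.mem_filter]
        refine ⟨Equiv.Perm.cycleOf_mem_cycleFactorsFinset_iff.mpr hxs, i, fun y hy => ?_⟩
        exact (mem_blockFin a).mp (Finset.mem_inter.mp (hsub hy)).1
      have hxcyc : x ∈ (π.cycleOf x).support :=
        Equiv.Perm.mem_support_cycleOf_iff.mpr ⟨Equiv.Perm.SameCycle.refl _ _, hxs⟩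
      apply Finset.mem_union_left
      apply Finset.mem_biUnion.mpr
      refine ⟨π.cycleOf x, Finset.mem_filter.mpr ⟨hcSC, fun y hy => ?_⟩, hxcyc⟩
      exact (Finset.mem_inter.mp (hsub hy)).2

theorem sc_mem_cf {π c : Equiv.Perm (Fin (∑ t, a t))} (hc : c ∈ smallCycles a π) :
    c ∈ π.cycleFactorsFinset := (Finset.mem_filter.mp hc).1

theorem signed (π : Equiv.Perm (Fin (∑ t, a t))) :
    ∑ T ∈ Finset.univ.filter (fun T => π ∈ GT a T), (-1 : ℚ) ^ T.card
      = (cWeight a π : ℚ) := by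
  classical
  set SC := smallCycles a π with hSCdef
  set Fx := Finset.univ.filter (fun x => π x = x) with hFxdef
  have key : ∑ T ∈ Finset.univ.filter (fun T => π ∈ GT a T), (-1 : ℚ) ^ T.card
      = ∑ p ∈ SC.powerset ×ˢ Fx.powerset,
          (-1 : ℚ) ^ (∑ c ∈ p.1, c.support.card + p.2.card) := by
    refine Finset.sum_nbij'
      (fun T => (SC.filter (fun c => c.support ⊆ T), T.filter (fun x => π x = x)))
      (fun p => p.1.biUnion (fun c => c.support) ∪ p.2) ?_ ?_ ?_ ?_ ?_
    · -- forward membership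
      intro T hT
      rw [Finset.mem_product]
      constructor
      · exact Finset.mem_powerset.mpr (Finset.filter_subset _ _)
      · apply Finset.mem_powerset.mpr
        intro x hx
        have := Finset.mem_filter.mp hx
        exact Finset.mem_filter.mpr ⟨Finset.mem_univ _, this.2⟩
    · -- backward membership
      rintro ⟨R, F⟩ hp
      rw [Finset.mem_product] at hp
      have hR : R ⊆ SC := Finset.mem_powerset.mp hp.1
      have hF : F ⊆ Fx := Finset.mem_powerset.mp hp.2
      have hFfix : ∀ x ∈ F, π x = x := fun x hx => (Finset.mem_filter.mp (hF hx)).2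
      set T := R.biUnion (fun c => c.support) ∪ F with hTdef
      have hmemT : ∀ x ∈ T, x ∈ F ∨ ∃ c ∈ R, x ∈ c.support := by
        intro x hx
        rcases Finset.mem_union.mp hx with h | h
        · exact Or.inr (Finset.mem_biUnion.mp h)
        · exact Or.inl h
      refine Finset.mem_filter.mpr ⟨Finset.mem_univ _, (mem_GT a).mpr ⟨?_, ?_⟩⟩
      · -- Tᶜ invariant
        intro x hx
        rw [Finset.mem_compl] at hx ⊢
        intro hπx
        apply hx
        rcases hmemT _ hπx with h | ⟨c, hcR, hxc⟩
        · have : π (π x) = π x := hFfix _ h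
          have heq : π x = x := π.injective this
          rw [← heq]
          exact Finset.mem_union_right _ h
        · have : π⁻¹ (π x) ∈ c.support := cf_inv_apply_mem (sc_mem_cf a (hR hcR)) hxc
          rw [Equiv.Perm.inv_eq_iff_eq.mpr rfl] at this
          exact Finset.mem_union_left _ (Finset.mem_biUnion.mpr ⟨c, hcR, this⟩)
      · -- blocks invariant
        intro i x hx
        obtain ⟨hxB, hxT⟩ := Finset.mem_inter.mp hx
        rcases hmemT _ hxT with h | ⟨c, hcR, hxc⟩
        · rw [hFfix _ h]
          exact hx
        · have hcf := sc_mem_cf a (hR hcR)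
          have hπxc : π x ∈ c.support := cf_apply_mem hcf hxc
          obtain ⟨i', hi'⟩ := (Finset.mem_filter.mp (hR hcR)).2
          have hii' : i = i' :=
            inBlock_unique a ((mem_blockFin a).mp hxB) (hi' x hxc)
          refine Finset.mem_inter.mpr ⟨(mem_blockFin a).mpr ?_, ?_⟩
          · rw [hii']
            exact hi' _ hπxc
          · exact Finset.mem_union_left _ (Finset.mem_biUnion.mpr ⟨c, hcR, hπxc⟩)
    · -- left inverse
      intro T hT
      exact decomp a (Finset.mem_filter.mp hT).2
    · -- right inverse
      rintro ⟨R, F⟩ hp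
      rw [Finset.mem_product] at hp
      have hR : R ⊆ SC := Finset.mem_powerset.mp hp.1
      have hF : F ⊆ Fx := Finset.mem_powerset.mp hp.2
      have hFfix : ∀ x ∈ F, π x = x := fun x hx => (Finset.mem_filter.mp (hF hx)).2
      set T := R.biUnion (fun c => c.support) ∪ F with hTdef
      have hsuppne : ∀ c ∈ R, ∀ x ∈ c.support, π x ≠ x :=
        fun c hc x hx => cf_ne (sc_mem_cf a (hR hc)) hx
      have hRR : SC.filter (fun c => c.support ⊆ T) = R := by
        ext c
        rw [Finset.mem_filter]
        constructor
        · rintro ⟨hcSC, hsub⟩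
          have hcyc : c.IsCycle := (Equiv.Perm.mem_cycleFactorsFinset_iff.mp (sc_mem_cf a hcSC)).1
          obtain ⟨x, hx⟩ := hcyc.nonempty_support
          have hxT : x ∈ T := hsub hx
          rcases Finset.mem_union.mp hxT with h | h
          · obtain ⟨c', hc', hxc'⟩ := Finset.mem_biUnion.mp h
            have : c = c' := by
              by_contra hne
              exact Finset.disjoint_left.mp
                (cf_disj (sc_mem_cf a hcSC) (sc_mem_cf a (hR hc')) hne) hx hxc'
            rwa [this]
          · exact absurd (hFfix _ h) (cf_ne (sc_mem_cf a hcSC) hx)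
        · intro hcR
          refine ⟨hR hcR, fun x hx => Finset.mem_union_left _ (Finset.mem_biUnion.mpr ⟨c, hcR, hx⟩)⟩
      have hFF : T.filter (fun x => π x = x) = F := by
        ext x
        rw [Finset.mem_filter]
        constructor
        · rintro ⟨hxT, hfix⟩
          rcases Finset.mem_union.mp hxT with h | h
          · obtain ⟨c', hc', hxc'⟩ := Finset.mem_biUnion.mp h
            exact absurd hfix (hsuppne c' hc' x hxc')
          · exact h
        · intro hxF
          exact ⟨Finset.mem_union_right _ hxF, hFfix _ hxF⟩
      exact Prod.ext hRR hFF
    · -- values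
      intro T hT
      have hdec := decomp a (Finset.mem_filter.mp hT).2
      congr 1
      set R := SC.filter (fun c => c.support ⊆ T) with hRdef
      set F := T.filter (fun x => π x = x) with hFdef
      have hdisj : Disjoint (R.biUnion (fun c => c.support)) F := by
        rw [Finset.disjoint_left]
        intro x hx hxF
        obtain ⟨c, hc, hxc⟩ := Finset.mem_biUnion.mp hx
        exact cf_ne (sc_mem_cf a (Finset.mem_filter.mp hc).1) hxc (Finset.mem_filter.mp hxF).2
      calc T.card = (R.biUnion (fun c => c.support) ∪ F).card := by rw [hdec]
        _ = (R.biUnion (fun c => c.support)).card + F.card :=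
            Finset.card_union_of_disjoint hdisj
        _ = ∑ c ∈ R, c.support.card + F.card := by
            rw [Finset.card_biUnion]
            intro c hc d hd hcd
            exact cf_disj (sc_mem_cf a (Finset.mem_filter.mp hc).1)
              (sc_mem_cf a (Finset.mem_filter.mp hd).1) hcd
  rw [key, Finset.sum_product]
  have hsplit : ∀ R ∈ SC.powerset, ∀ F ∈ Fx.powerset,
      ((-1 : ℚ)) ^ (∑ c ∈ R, c.support.card + F.card)
        = (-1 : ℚ) ^ (∑ c ∈ R, c.support.card) * (-1 : ℚ) ^ F.card :=
    fun _ _ _ _ => pow_add _ _ _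
  rw [Finset.sum_congr rfl (fun R hR => Finset.sum_congr rfl (fun F hF => hsplit R hR F hF))]
  rw [← Finset.sum_mul_sum]
  have hF : ∑ F ∈ Fx.powerset, (-1 : ℚ) ^ F.card = if Fx = ∅ then 1 else 0 := by
    have := Finset.sum_powerset_neg_one_pow_card (x := Fx)
    have hcast : ((∑ m ∈ Fx.powerset, (-1 : ℤ) ^ m.card : ℤ) : ℚ)
        = ∑ m ∈ Fx.powerset, (-1 : ℚ) ^ m.card := by
      push_cast
      rfl
    rw [← hcast, this]
    split <;> simp
  have hRfac : ∑ R ∈ SC.powerset, (-1 : ℚ) ^ (∑ c ∈ R, c.support.card)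
      = ∏ c ∈ SC, ((-1 : ℚ) ^ c.support.card + 1) := by
    rw [Finset.prod_add]
    apply Finset.sum_congr rfl
    intro R hR
    rw [Finset.prod_const_one, mul_one, Finset.prod_pow_eq_pow_sum]
  rw [hF, hRfac]
  by_cases h1 : ∃ x : Fin (∑ t, a t), π x = x
  · have hFx : Fx ≠ ∅ := by
      obtain ⟨x, hx⟩ := h1
      exact Finset.ne_empty_of_mem (Finset.mem_filter.mpr ⟨Finset.mem_univ _, hx⟩)
    rw [if_neg hFx, mul_zero, cWeight, if_pos (Or.inl h1)]
    simp
  · have hFx : Fx = ∅ := by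
      rw [hFxdef, Finset.filter_eq_empty_iff]
      intro x _
      exact fun hc => h1 ⟨x, hc⟩
    rw [if_pos hFx, mul_one]
    by_cases h2 : ∃ c ∈ smallCycles a π, Odd c.support.card
    · obtain ⟨c, hc, hodd⟩ := h2
      rw [Finset.prod_eq_zero hc (by rw [hodd.neg_one_pow]; ring)]
      rw [cWeight, if_pos (Or.inr ⟨c, hc, hodd⟩)]
      simp
    · have hall : ∀ c ∈ SC, ((-1 : ℚ) ^ c.support.card + 1) = 2 := by
        intro c hc
        have heven : Even c.support.card := by
          rcases Nat.even_or_odd c.support.card with h | h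
          · exact h
          · exact absurd ⟨c, hc, h⟩ h2
        rw [heven.neg_one_pow]
        norm_num
      rw [Finset.prod_congr rfl hall, Finset.prod_const]
      rw [cWeight, if_neg (by push_neg; exact ⟨fun x => fun hc => h1 ⟨x, hc⟩, fun c hc => by
        rcases Nat.even_or_odd c.support.card with h | h
        · rwa [← Nat.not_odd_iff_even] at h
        · exact absurd ⟨c, hc, h⟩ h2⟩)]
      push_cast
      rfl

end signedsec

end main

section finalsec

variable {k : ℕ} (a : Fin k → ℕ)

theorem perpi (π : Equiv.Perm (Fin (∑ t, a t))) :
    ∑ T ∈ Finset.univ.filter (fun T => π ∈ GT a T),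
      (-1 : Polynomial ℚ) ^ T.card * X ^ (Finset.univ.filter (fun x => π x = x)).card
      = Polynomial.C ((cWeight a π : ℚ)) := by
  rw [← Finset.sum_mul]
  have h1 : ∑ T ∈ Finset.univ.filter (fun T => π ∈ GT a T), (-1 : Polynomial ℚ) ^ T.card
      = Polynomial.C ((cWeight a π : ℚ)) := by
    have hc : ∀ T : Finset (Fin (∑ t, a t)),
        (-1 : Polynomial ℚ) ^ T.card = Polynomial.C ((-1 : ℚ) ^ T.card) := by
      intro T; rw [map_pow, map_neg, map_one]
    rw [Finset.sum_congr rfl (fun T _ => hc T), ← map_sum, signed a π]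
  rw [h1]
  by_cases hfix : ∃ x, π x = x
  · have h0 : cWeight a π = 0 := by rw [cWeight, if_pos (Or.inl hfix)]
    rw [h0]
    simp
  · have hemp : Finset.univ.filter (fun x : Fin (∑ t, a t) => π x = x) = ∅ := by
      rw [Finset.filter_eq_empty_iff]
      exact fun x _ hc => hfix ⟨x, hc⟩
    rw [hemp]
    simp

theorem main_sum :
    ∑ T : Finset (Fin (∑ t, a t)),
        (-1 : Polynomial ℚ) ^ T.card * fpol Tᶜ.card *
          ∏ i, fpol ((blockFin a i ∩ T).card)
      = Polynomial.C (∑ π : Equiv.Perm (Fin (∑ t, a t)), (cWeight a π : ℚ)) := by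
  have e1 : ∀ T : Finset (Fin (∑ t, a t)),
      (-1 : Polynomial ℚ) ^ T.card * fpol Tᶜ.card * ∏ i, fpol ((blockFin a i ∩ T).card)
      = ∑ π ∈ Finset.univ.filter (fun π => π ∈ GT a T),
          (-1 : Polynomial ℚ) ^ T.card * X ^ (Finset.univ.filter (fun x => π x = x)).card := by
    intro T
    rw [mul_assoc, step1 a T, Finset.mul_sum]
    apply Finset.sum_congr
    · rw [Finset.filter_mem_eq_inter, Finset.univ_inter]
    · intros; rfl
  calc ∑ T : Finset (Fin (∑ t, a t)),
        (-1 : Polynomial ℚ) ^ T.card * fpol Tᶜ.card * ∏ i, fpol ((blockFin a i ∩ T).card)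
      = ∑ T : Finset (Fin (∑ t, a t)), ∑ π ∈ Finset.univ.filter (fun π => π ∈ GT a T),
          (-1 : Polynomial ℚ) ^ T.card * X ^ (Finset.univ.filter (fun x => π x = x)).card :=
        Finset.sum_congr rfl (fun T _ => e1 T)
    _ = ∑ T : Finset (Fin (∑ t, a t)), ∑ π : Equiv.Perm (Fin (∑ t, a t)),
          if π ∈ GT a T then
            (-1 : Polynomial ℚ) ^ T.card * X ^ (Finset.univ.filter (fun x => π x = x)).card
          else 0 :=
        Finset.sum_congr rfl (fun T _ => Finset.sum_filter _ _)
    _ = ∑ π : Equiv.Perm (Fin (∑ t, a t)), ∑ T : Finset (Fin (∑ t, a t)),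
          if π ∈ GT a T then
            (-1 : Polynomial ℚ) ^ T.card * X ^ (Finset.univ.filter (fun x => π x = x)).card
          else 0 := Finset.sum_comm
    _ = ∑ π : Equiv.Perm (Fin (∑ t, a t)), ∑ T ∈ Finset.univ.filter (fun T => π ∈ GT a T),
          (-1 : Polynomial ℚ) ^ T.card * X ^ (Finset.univ.filter (fun x => π x = x)).card :=
        Finset.sum_congr rfl (fun π _ => (Finset.sum_filter _ _).symm)
    _ = ∑ π : Equiv.Perm (Fin (∑ t, a t)), Polynomial.C ((cWeight a π : ℚ)) :=
        Finset.sum_congr rfl (fun π _ => perpi a π)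
    _ = Polynomial.C (∑ π : Equiv.Perm (Fin (∑ t, a t)), (cWeight a π : ℚ)) :=
        (map_sum _ _ _).symm

end finalsec

/-- The polynomial
`(1/(a₁!⋯a_k!)) ∑_{T ⊆ {1,…,n}} (-1)^{|T|} f_λ(|{1,…,n}\T|) ∏ᵢ f_λ(|Aᵢ ∩ T|)`
is constant in `λ`, equal to `(1/(a₁!⋯a_k!)) ∑_{π ∈ S_n} c(π)`. -/
theorem polynomial_sum_constant (k : ℕ) (a : Fin k → ℕ) :
    (∏ i, ((a i).factorial : ℚ))⁻¹ •
      ∑ T : Finset (Fin (∑ t, a t)),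
        (-1 : Polynomial ℚ) ^ T.card * fpol Tᶜ.card *
          ∏ i, fpol ((blockFin a i ∩ T).card)
    = Polynomial.C ((∏ i, ((a i).factorial : ℚ))⁻¹ *
        ∑ π : Equiv.Perm (Fin (∑ t, a t)), (cWeight a π : ℚ)) := by
  rw [main_sum a, Polynomial.smul_C, smul_eq_mul]
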